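/- Let κ be an infinite cardinal and suppose P is a product, with supports of size ≤ κ, of partial orders each having the κ⁺-chain condition, and assume 2^κ = κ⁺. Then P has the κ⁺⁺-chain condition. -/

import Mathlib

set_option maxHeartbeats 1000000

open Cardinal Set

universe u

/-- The ordering of the `≤κ`-support product of the partial orders `P i`:
`q ≤ p` iff `dom q ⊇ dom p` and `q` is coordinatewise below `p` on `dom p`. -/
def ProdLE {ι : Type u} {P : ι → Type u} [∀ i, Preorder (P i)]
    (q p : ∀ i, Option (P i)) : Prop :=
  ∀ i x, p i = some x → ∃ y, q i = some y ∧ y ≤ x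

section Aux

variable {ι : Type u} {P : ι → Type u} [∀ i, Preorder (P i)]

/-- `a` realizes the "incompatibility type" `t` over `B`, within `A`. -/
def Realizes (A B : Set (∀ i, Option (P i))) (t : (∀ i, Option (P i)) → ι)
    (a : ∀ i, Option (P i)) : Prop :=
  a ∈ A ∧ a ∉ B ∧ ∀ b ∈ B, ∃ u v, a (t b) = some u ∧ b (t b) = some v ∧
    ¬∃ c, c ≤ u ∧ c ≤ v

open scoped Classical in
noncomputable def realizer (A B : Set (∀ i, Option (P i)))
    (t : (∀ i, Option (P i)) → ι) : ∀ i, Option (P i) :=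
  if h : ∃ a, Realizes A B t a then h.choose else fun _ => none

lemma realizer_spec {A B : Set (∀ i, Option (P i))} {t : (∀ i, Option (P i)) → ι}
    (h : ∃ a, Realizes A B t a) : Realizes A B t (realizer A B t) := by
  rw [realizer, dif_pos h]; exact h.choose_spec

/-- The set of (small, normalized) types over subsets of `X`. -/
def TT (κ : Cardinal.{u}) (i₀ : ι) (X : Set (∀ i, Option (P i))) :
    Set (Set (∀ i, Option (P i)) × ((∀ i, Option (P i)) → ι)) :=
  {p | p.1 ⊆ X ∧ #p.1 ≤ κ ∧ (∀ b ∈ p.1, b (p.2 b) ≠ none) ∧ ∀ b ∉ p.1, p.2 b = i₀}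

def gstep (κ : Cardinal.{u}) (A : Set (∀ i, Option (P i))) (i₀ : ι)
    (X : Set (∀ i, Option (P i))) : Set (∀ i, Option (P i)) :=
  X ∪ (A ∩ ((fun p => realizer A p.1 p.2) '' TT κ i₀ X))

noncomputable def chain (κ : Cardinal.{u}) (A : Set (∀ i, Option (P i))) (i₀ : ι) :
    (Order.succ κ).ord.ToType → Set (∀ i, Option (P i)) :=
  (IsWellFounded.wf (α := (Order.succ κ).ord.ToType) (r := (· < ·))).fix
    fun b ih => gstep κ A i₀ (⋃ c : Set.Iio b, ih c.1 c.2)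

lemma chain_eq (κ : Cardinal.{u}) (A : Set (∀ i, Option (P i))) (i₀ : ι)
    (b : (Order.succ κ).ord.ToType) :
    chain κ A i₀ b = gstep κ A i₀ (⋃ c : Set.Iio b, chain κ A i₀ c.1) :=
  WellFounded.fix_eq _ _ b

def MM (κ : Cardinal.{u}) (A : Set (∀ i, Option (P i))) (i₀ : ι) :
    Set (∀ i, Option (P i)) :=
  ⋃ b, chain κ A i₀ b

lemma chain_subset (κ : Cardinal.{u}) (A : Set (∀ i, Option (P i))) (i₀ : ι)
    (b : (Order.succ κ).ord.ToType) : chain κ A i₀ b ⊆ A := by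
  induction b using WellFoundedLT.induction with
  | _ b IH =>
    rw [chain_eq, gstep]
    apply union_subset
    · exact iUnion_subset fun c => IH c.1 c.2
    · exact inter_subset_left

lemma MM_subset (κ : Cardinal.{u}) (A : Set (∀ i, Option (P i))) (i₀ : ι) :
    MM κ A i₀ ⊆ A :=
  iUnion_subset fun b => chain_subset κ A i₀ b

lemma card_TT (κ : Cardinal.{u}) (hκ : ℵ₀ ≤ κ) (i₀ : ι) (X : Set (∀ i, Option (P i)))
    (hX : #X ≤ 2 ^ κ) (hXs : ∀ b ∈ X, #{i | b i ≠ none} ≤ κ) :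
    #(TT κ i₀ X) ≤ 2 ^ κ := by
  classical
  have h2 : ℵ₀ ≤ (2 : Cardinal.{u}) ^ κ := hκ.trans (cantor κ).le
  set T : Set (Set (∀ i, Option (P i)) × ((∀ i, Option (P i)) → ι)) := TT κ i₀ X with hT
  have hcover : T = ⋃ B : {B : Set (∀ i, Option (P i)) // B ⊆ X ∧ #B ≤ κ},
      {p ∈ T | p.1 = B.1} := by
    ext p
    simp only [mem_iUnion, mem_sep_iff]
    constructor
    · intro hp
      exact ⟨⟨p.1, hp.1, hp.2.1⟩, hp, rfl⟩
    · rintro ⟨B, hp, -⟩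
      exact hp
  have hslice : ∀ B : {B : Set (∀ i, Option (P i)) // B ⊆ X ∧ #B ≤ κ},
      #({p ∈ T | p.1 = B.1}) ≤ 2 ^ κ := by
    intro B
    have hmem : ∀ p : ({p ∈ T | p.1 = B.1} : Set _), ∀ b : B.1,
        (b : ∀ i, Option (P i)) (p.1.2 b.1) ≠ none := by
      rintro ⟨p, hp, hp1⟩ ⟨b, hb⟩
      exact hp.2.2.1 b (by rw [hp1]; exact hb)
    have hinj : #({p ∈ T | p.1 = B.1}) ≤ #(∀ b : B.1, {i | b.1 i ≠ none}) := by
      refine mk_le_of_injective (f := fun p => fun b =>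
        (⟨p.1.2 b.1, hmem p b⟩ : {i | (b : ∀ i, Option (P i)) i ≠ none})) ?_
      rintro ⟨p, hp, hp1⟩ ⟨q, hq, hq1⟩ h
      have h1 : p.1 = q.1 := hp1.trans hq1.symm
      have h2 : p.2 = q.2 := by
        funext b
        by_cases hb : b ∈ p.1
        · have := congrFun h ⟨b, hp1 ▸ hb⟩
          exact congrArg Subtype.val this
        · rw [hp.2.2.2 b hb, hq.2.2.2 b (h1 ▸ hb)]
      exact Subtype.ext (Prod.ext h1 h2)
    refine hinj.trans ?_
    calc #(∀ b : B.1, {i | b.1 i ≠ none}) = prod (fun b : B.1 => #{i | b.1 i ≠ none}) :=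
          mk_pi _
      _ ≤ prod (fun _ : B.1 => κ) :=
          prod_le_prod _ _ fun b => hXs b.1 (B.2.1 b.2)
      _ = κ ^ #B.1 := prod_const' _ _
      _ ≤ κ ^ κ := power_le_power_left (aleph0_pos.trans_le hκ).ne' B.2.2
      _ = 2 ^ κ := power_self_eq hκ
  rw [hcover]
  refine (mk_iUnion_le _).trans ?_
  refine (mul_le_mul' ?_ (ciSup_le' hslice)).trans (mul_eq_self h2).le
  refine (mk_bounded_subset_le X κ).trans ?_
  calc max #X ℵ₀ ^ κ ≤ ((2:Cardinal) ^ κ) ^ κ :=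
        power_le_power_right (max_le hX h2)
    _ = 2 ^ (κ * κ) := by rw [← power_mul]
    _ = 2 ^ κ := by rw [mul_eq_self hκ]

lemma card_chain (κ : Cardinal.{u}) (hκ : ℵ₀ ≤ κ) (A : Set (∀ i, Option (P i))) (i₀ : ι)
    (hsupp : ∀ b ∈ A, #{i | b i ≠ none} ≤ κ)
    (b : (Order.succ κ).ord.ToType) : #(chain κ A i₀ b) ≤ 2 ^ κ := by
  have h2 : ℵ₀ ≤ (2 : Cardinal.{u}) ^ κ := hκ.trans (cantor κ).le
  induction b using WellFoundedLT.induction with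
  | _ b IH =>
    rw [chain_eq]
    have hU : #(⋃ c : Set.Iio b, chain κ A i₀ c.1) ≤ 2 ^ κ := by
      have hsup : (⨆ c : ↥(Set.Iio b), #(chain κ A i₀ c.1)) ≤ 2 ^ κ :=
        ciSup_le' fun c => IH c.1 c.2
      have hidx : #(Set.Iio b) ≤ 2 ^ κ := by
        calc #(Set.Iio b) ≤ #((Order.succ κ).ord.ToType) := mk_set_le _
          _ = Order.succ κ := by rw [mk_toType, card_ord]
          _ ≤ 2 ^ κ := Order.succ_le_of_lt (cantor κ)
      exact (mk_iUnion_le _).trans ((mul_le_mul' hidx hsup).trans (mul_eq_self h2).le)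
    rw [gstep]
    refine (mk_union_le _ _).trans ?_
    refine le_trans (add_le_add hU ?_) (add_eq_self h2).le
    refine le_trans (mk_le_mk_of_subset inter_subset_right) ?_
    refine mk_image_le.trans ?_
    have hUA : (⋃ c : Set.Iio b, chain κ A i₀ c.1) ⊆ A :=
      iUnion_subset fun c => chain_subset κ A i₀ c.1
    exact card_TT κ hκ i₀ _ hU fun q hq => hsupp q (hUA hq)

lemma card_MM (κ : Cardinal.{u}) (hκ : ℵ₀ ≤ κ) (A : Set (∀ i, Option (P i))) (i₀ : ι)
    (hsupp : ∀ b ∈ A, #{i | b i ≠ none} ≤ κ) : #(MM κ A i₀) ≤ 2 ^ κ := by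
  have h2 : ℵ₀ ≤ (2 : Cardinal.{u}) ^ κ := hκ.trans (cantor κ).le
  rw [MM]
  have hsup : (⨆ b : (Order.succ κ).ord.ToType, #(chain κ A i₀ b)) ≤ 2 ^ κ :=
    ciSup_le' fun b => card_chain κ hκ A i₀ hsupp b
  have hidx : #((Order.succ κ).ord.ToType) ≤ 2 ^ κ := by
    rw [mk_toType, card_ord]
    exact Order.succ_le_of_lt (cantor κ)
  exact (mk_iUnion_le _).trans ((mul_le_mul' hidx hsup).trans (mul_eq_self h2).le)

lemma mem_MM_of (κ : Cardinal.{u}) (hκ : ℵ₀ ≤ κ) (A : Set (∀ i, Option (P i))) (i₀ : ι)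
    {B : Set (∀ i, Option (P i))} {t : (∀ i, Option (P i)) → ι}
    (hB : B ⊆ MM κ A i₀) (hBκ : #B ≤ κ)
    (ht1 : ∀ b ∈ B, b (t b) ≠ none) (ht2 : ∀ b ∉ B, t b = i₀)
    (hex : ∃ a, Realizes A B t a) : realizer A B t ∈ MM κ A i₀ := by
  classical
  have hreg : ((Order.succ κ).ord).cof = Order.succ κ := (isRegular_succ hκ).cof_eq
  have hstage : ∀ q : B, ∃ b, q.1 ∈ chain κ A i₀ b := fun q => mem_iUnion.1 (hB q.2)
  choose f hf using hstage
  set e := Ordinal.ToType.mk (o := (Order.succ κ).ord) with he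
  have hslt : (⨆ q : B, Order.succ (e.symm (f q)).1) < (Order.succ κ).ord := by
    apply Ordinal.iSup_lt_ord
    · rw [hreg]; exact hBκ.trans_lt (Order.lt_succ κ)
    · intro q
      exact (Cardinal.isSuccLimit_ord (hκ.trans (Order.le_succ κ))).succ_lt (e.symm (f q)).2
  set γ : (Order.succ κ).ord.ToType := e ⟨_, hslt⟩ with hγ
  have hflt : ∀ q : B, f q < γ := by
    intro q
    have h1 : e.symm (f q) < (⟨_, hslt⟩ : Set.Iio (Order.succ κ).ord) := by
      rw [← Subtype.coe_lt_coe]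
      exact lt_of_lt_of_le (Order.lt_succ _) (le_ciSup (Ordinal.bddAbove_range _) q)
    have h2 : e (e.symm (f q)) < e ⟨_, hslt⟩ := by
      rw [OrderIso.lt_iff_lt]
      exact h1
    rwa [OrderIso.apply_symm_apply] at h2
  have hmemT : (B, t) ∈ TT κ i₀ (⋃ c : Set.Iio γ, chain κ A i₀ c.1) := by
    refine ⟨fun q hq => mem_iUnion.2 ⟨⟨f ⟨q, hq⟩, hflt ⟨q, hq⟩⟩, hf ⟨q, hq⟩⟩, hBκ, ht1, ht2⟩
  have hγmem : realizer A B t ∈ chain κ A i₀ γ := by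
    rw [chain_eq, gstep]
    exact mem_union_right _ ⟨(realizer_spec hex).1, ⟨(B, t), hmemT, rfl⟩⟩
  exact mem_iUnion.2 ⟨γ, hγmem⟩

noncomputable def seqA (κ : Cardinal.{u}) (A : Set (∀ i, Option (P i)))
    (tmk : Set (∀ i, Option (P i)) → (∀ i, Option (P i)) → ι) :
    (Order.succ κ).ord.ToType → ∀ i, Option (P i) :=
  (IsWellFounded.wf (α := (Order.succ κ).ord.ToType) (r := (· < ·))).fix
    fun b ih => realizer A {q | ∃ c : Set.Iio b, ih c.1 c.2 = q}
      (tmk {q | ∃ c : Set.Iio b, ih c.1 c.2 = q})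

lemma seqA_eq (κ : Cardinal.{u}) (A : Set (∀ i, Option (P i)))
    (tmk : Set (∀ i, Option (P i)) → (∀ i, Option (P i)) → ι)
    (b : (Order.succ κ).ord.ToType) :
    seqA κ A tmk b = realizer A {q | ∃ c : Set.Iio b, seqA κ A tmk c.1 = q}
      (tmk {q | ∃ c : Set.Iio b, seqA κ A tmk c.1 = q}) :=
  WellFounded.fix_eq _ _ b

end Aux

/-- A product, with supports of size `≤ κ`, of `κ⁺`-cc partial orders is `κ⁺⁺`-cc,
provided `2^κ = κ⁺`: every antichain has cardinality at most `κ⁺`. -/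
theorem prod_chain_condition (κ : Cardinal.{u}) (hκ : ℵ₀ ≤ κ)
    (hCH : (2 : Cardinal.{u}) ^ κ = Order.succ κ)
    (ι : Type u) (P : ι → Type u) [∀ i, Preorder (P i)]
    (hcc : ∀ i, ∀ B : Set (P i),
      (∀ a ∈ B, ∀ b ∈ B, a ≠ b → ¬ ∃ c, c ≤ a ∧ c ≤ b) → #B ≤ κ)
    (A : Set (∀ i, Option (P i)))
    (hsupp : ∀ q ∈ A, #{i | q i ≠ none} ≤ κ)
    (hanti : ∀ p ∈ A, ∀ q ∈ A, p ≠ q →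
      ¬ ∃ r : ∀ i, Option (P i), #{i | r i ≠ none} ≤ κ ∧ ProdLE r p ∧ ProdLE r q) :
    #A ≤ Order.succ κ := by
  classical
  by_contra hA
  push_neg at hA
  -- dispose of the case of empty index type
  rcases isEmpty_or_nonempty ι with hι | hι
  · have hsub : A.Subsingleton := by
      intro p hp q hq
      funext i
      exact hι.elim i
    have : #A ≤ 1 := mk_le_one_iff_set_subsingleton.2 hsub
    exact absurd (this.trans (le_trans (le_trans one_le_aleph0 hκ) (Order.le_succ κ)))
      hA.not_ge
  obtain ⟨i₀⟩ := hι
  -- the incompatibility witness function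
  have key : ∀ p ∈ A, ∀ q ∈ A, p ≠ q → ∃ i, ∃ u v, p i = some u ∧ q i = some v ∧
      ¬∃ c, c ≤ u ∧ c ≤ v := by
    intro p hp q hq hne
    by_contra hno
    push_neg at hno
    apply hanti p hp q hq hne
    refine ⟨fun i => if h : ∃ u v, p i = some u ∧ q i = some v then
      some (hno i h.choose h.choose_spec.choose h.choose_spec.choose_spec.1
        h.choose_spec.choose_spec.2).choose
      else if (p i).isSome then p i else q i, ?_, ?_, ?_⟩
    · -- support bound
      have hsub : {i | (fun i => if h : ∃ u v, p i = some u ∧ q i = some v then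
          some (hno i h.choose h.choose_spec.choose h.choose_spec.choose_spec.1
            h.choose_spec.choose_spec.2).choose
          else if (p i).isSome then p i else q i) i ≠ none} ⊆
          {i | p i ≠ none} ∪ {i | q i ≠ none} := by
        intro i hi
        by_contra hni
        simp only [mem_union, mem_setOf_eq, not_or, not_not] at hni
        apply hi
        simp only [mem_setOf_eq]
        rw [dif_neg]
        · rw [hni.1]
          simp [hni.2]
        · rintro ⟨u, v, hu, -⟩
          rw [hni.1] at hu
          exact Option.some_ne_none _ hu.symm
      refine (mk_le_mk_of_subset hsub).trans ((mk_union_le _ _).trans ?_)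
      exact (add_le_add (hsupp p hp) (hsupp q hq)).trans (add_eq_self hκ).le
    · -- below p
      intro i x hx
      by_cases h : ∃ u v, p i = some u ∧ q i = some v
      · have hux : h.choose = x :=
          Option.some_injective _ ((h.choose_spec.choose_spec.1).symm.trans hx)
        refine ⟨_, dif_pos h, ?_⟩
        rw [← hux]
        exact (hno i h.choose h.choose_spec.choose h.choose_spec.choose_spec.1
          h.choose_spec.choose_spec.2).choose_spec.1
      · refine ⟨x, ?_, le_refl x⟩
        simp only [dif_neg h]
        rw [hx]
        simp
    · -- below q
      intro i x hx
      by_cases h : ∃ u v, p i = some u ∧ q i = some v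
      · have hvx : h.choose_spec.choose = x :=
          Option.some_injective _ ((h.choose_spec.choose_spec.2).symm.trans hx)
        refine ⟨_, dif_pos h, ?_⟩
        rw [← hvx]
        exact (hno i h.choose h.choose_spec.choose h.choose_spec.choose_spec.1
          h.choose_spec.choose_spec.2).choose_spec.2
      · have hp0 : p i = none := by
          cases hpi : p i with
          | none => rfl
          | some u => exact absurd ⟨u, x, hpi, hx⟩ h
        refine ⟨x, ?_, le_refl x⟩
        simp only [dif_neg h]
        rw [hp0, hx]
        simp
  obtain ⟨w, hw⟩ : ∃ w : (∀ i, Option (P i)) → (∀ i, Option (P i)) → ι,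
      ∀ p ∈ A, ∀ q ∈ A, p ≠ q → ∃ u v, p (w p q) = some u ∧ q (w p q) = some v ∧
        ¬∃ c, c ≤ u ∧ c ≤ v := by
    haveI : Nonempty ι := ⟨i₀⟩
    refine ⟨fun p q => Classical.epsilon (fun i => ∃ u v, p i = some u ∧ q i = some v ∧
      ¬∃ c, c ≤ u ∧ c ≤ v), fun p hp q hq hne => ?_⟩
    exact Classical.epsilon_spec (key p hp q hq hne)
  -- the saturated set M and a point x outside of it
  have hMA : MM κ A i₀ ⊆ A := MM_subset κ A i₀
  have hMcard : #(MM κ A i₀) ≤ 2 ^ κ := card_MM κ hκ A i₀ hsupp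
  obtain ⟨x, hxA, hxM⟩ : ∃ x, x ∈ A ∧ x ∉ MM κ A i₀ := by
    by_contra h
    push_neg at h
    have : #A ≤ #(MM κ A i₀) := mk_le_mk_of_subset fun q hq => h q hq
    rw [hCH] at hMcard
    exact absurd (this.trans hMcard) hA.not_ge
  -- the type function
  obtain ⟨tmk, htmk1, htmk2⟩ : ∃ tmk : Set (∀ i, Option (P i)) → (∀ i, Option (P i)) → ι,
      (∀ B b, b ∈ B → tmk B b = w x b) ∧ (∀ B b, b ∉ B → tmk B b = i₀) :=
    ⟨fun B b => if b ∈ B then w x b else i₀,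
      fun B b h => if_pos h, fun B b h => if_neg h⟩
  -- the sequence and its properties
  have main : ∀ o : (Order.succ κ).ord.ToType,
      seqA κ A tmk o ∈ MM κ A i₀ ∧
      Realizes A {q | ∃ c : Set.Iio o, seqA κ A tmk c.1 = q}
        (tmk {q | ∃ c : Set.Iio o, seqA κ A tmk c.1 = q}) (seqA κ A tmk o) := by
    intro o
    induction o using WellFoundedLT.induction with
    | _ o IH =>
      have hSsub : {q | ∃ c : Set.Iio o, seqA κ A tmk c.1 = q} ⊆ MM κ A i₀ := by
        rintro q ⟨c, rfl⟩
        exact (IH c.1 c.2).1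
      have hSA : {q | ∃ c : Set.Iio o, seqA κ A tmk c.1 = q} ⊆ A := hSsub.trans hMA
      have hScard : #({q | ∃ c : Set.Iio o, seqA κ A tmk c.1 = q} :
          Set (∀ i, Option (P i))) ≤ κ := by
        have h1 : #({q | ∃ c : Set.Iio o, seqA κ A tmk c.1 = q} :
            Set (∀ i, Option (P i))) ≤ #(Set.Iio o) :=
          mk_le_of_surjective (f := fun c : Set.Iio o => (⟨seqA κ A tmk c.1, c, rfl⟩ :
            {q | ∃ c : Set.Iio o, seqA κ A tmk c.1 = q}))
            (by rintro ⟨q, c, rfl⟩; exact ⟨c, rfl⟩)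
        exact h1.trans (Order.lt_succ_iff.1 (Cardinal.mk_Iio_toType_ord_lt o))
      have hxS : x ∉ {q | ∃ c : Set.Iio o, seqA κ A tmk c.1 = q} := fun h => hxM (hSsub h)
      have hwS : ∀ b ∈ {q | ∃ c : Set.Iio o, seqA κ A tmk c.1 = q},
          ∃ u v, x (w x b) = some u ∧ b (w x b) = some v ∧ ¬∃ c, c ≤ u ∧ c ≤ v := by
        intro b hb
        exact hw x hxA b (hSA hb) (fun h => hxM (h ▸ hSsub hb))
      have hex : ∃ a, Realizes A {q | ∃ c : Set.Iio o, seqA κ A tmk c.1 = q}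
          (tmk {q | ∃ c : Set.Iio o, seqA κ A tmk c.1 = q}) a := by
        refine ⟨x, hxA, hxS, fun b hb => ?_⟩
        rw [htmk1 _ _ hb]
        exact hwS b hb
      have ht1 : ∀ b ∈ {q | ∃ c : Set.Iio o, seqA κ A tmk c.1 = q},
          b (tmk {q | ∃ c : Set.Iio o, seqA κ A tmk c.1 = q} b) ≠ none := by
        intro b hb
        rw [htmk1 _ _ hb]
        obtain ⟨u, v, -, hv, -⟩ := hwS b hb
        rw [hv]
        simp
      have hmem := mem_MM_of κ hκ A i₀ hSsub hScard ht1 (htmk2 _) hex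
      constructor
      · rw [seqA_eq]
        exact hmem
      · rw [seqA_eq]
        exact realizer_spec hex
  -- all the witnesses against x live in the support of x
  have hwi : ∀ o : (Order.succ κ).ord.ToType, w x (seqA κ A tmk o) ∈ {i | x i ≠ none} := by
    intro o
    obtain ⟨u, v, hu, -, -⟩ := hw x hxA (seqA κ A tmk o) (hMA (main o).1)
      (fun h => hxM (h ▸ (main o).1))
    simp only [mem_setOf_eq]
    rw [hu]
    simp
  -- find a single coordinate with a large fiber
  obtain ⟨i, hOi⟩ : ∃ i : ι, κ < #{o : (Order.succ κ).ord.ToType | w x (seqA κ A tmk o) = i} := by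
    by_contra h
    push_neg at h
    have hcover : (univ : Set ((Order.succ κ).ord.ToType)) =
        ⋃ j : {i | x i ≠ none}, {o : (Order.succ κ).ord.ToType | w x (seqA κ A tmk o) = j.1} := by
      ext o
      simp only [mem_univ, mem_iUnion, mem_setOf_eq, true_iff]
      exact ⟨⟨_, hwi o⟩, rfl⟩
    have h1 : #(univ : Set ((Order.succ κ).ord.ToType)) ≤ κ := by
      rw [hcover]
      have hsup : (⨆ j : {i | x i ≠ none},
          #{o : (Order.succ κ).ord.ToType | w x (seqA κ A tmk o) = j.1}) ≤ κ :=
        ciSup_le' fun j => h j.1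
      have hidx : #({i | x i ≠ none} : Set ι) ≤ κ := hsupp x hxA
      exact (mk_iUnion_le _).trans ((mul_le_mul' hidx hsup).trans (mul_eq_self hκ).le)
    rw [mk_univ, mk_toType, card_ord] at h1
    exact absurd h1 (Order.lt_succ κ).not_ge
  -- extract values and derive a contradiction with the chain condition in `P i`
  have hval : ∀ o ∈ {o : (Order.succ κ).ord.ToType | w x (seqA κ A tmk o) = i},
      ∃ y, seqA κ A tmk o i = some y := by
    intro o ho
    rw [← ho]
    obtain ⟨u, v, -, hv, -⟩ := hw x hxA (seqA κ A tmk o) (hMA (main o).1)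
      (fun h => hxM (h ▸ (main o).1))
    exact ⟨v, hv⟩
  have hpair : ∀ o ∈ {o : (Order.succ κ).ord.ToType | w x (seqA κ A tmk o) = i},
      ∀ o' ∈ {o : (Order.succ κ).ord.ToType | w x (seqA κ A tmk o) = i}, o' < o →
      ∀ y z, seqA κ A tmk o i = some y → seqA κ A tmk o' i = some z →
      ¬∃ c, c ≤ y ∧ c ≤ z := by
    intro o ho o' ho' hlt y z hy hz
    have hmem : seqA κ A tmk o' ∈ {q | ∃ c : Set.Iio o, seqA κ A tmk c.1 = q} :=
      ⟨⟨o', hlt⟩, rfl⟩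
    have H := (main o).2.2.2 _ hmem
    have heq : tmk {q | ∃ c : Set.Iio o, seqA κ A tmk c.1 = q} (seqA κ A tmk o') = i :=
      (htmk1 _ _ hmem).trans ho'
    rw [heq] at H
    obtain ⟨u, v, hu, hv, hnc⟩ := H
    have huy : u = y := Option.some_injective _ (hu.symm.trans hy)
    have hvz : v = z := Option.some_injective _ (hv.symm.trans hz)
    rw [← huy, ← hvz]
    exact hnc
  have hVanti : ∀ y ∈ {y : P i | ∃ o ∈ {o : (Order.succ κ).ord.ToType |
        w x (seqA κ A tmk o) = i}, seqA κ A tmk o i = some y},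
      ∀ z ∈ {y : P i | ∃ o ∈ {o : (Order.succ κ).ord.ToType |
        w x (seqA κ A tmk o) = i}, seqA κ A tmk o i = some y},
      y ≠ z → ¬∃ c, c ≤ y ∧ c ≤ z := by
    rintro y ⟨o, ho, hy⟩ z ⟨o', ho', hz⟩ hyz
    rcases lt_trichotomy o' o with h | h | h
    · exact hpair o ho o' ho' h y z hy hz
    · subst h
      rw [hy] at hz
      exact absurd (Option.some_injective _ hz) hyz
    · intro hc
      obtain ⟨c, hc1, hc2⟩ := hc
      exact hpair o' ho' o ho h z y hz hy ⟨c, hc2, hc1⟩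
  have hVκ : #({y : P i | ∃ o ∈ {o : (Order.succ κ).ord.ToType |
      w x (seqA κ A tmk o) = i}, seqA κ A tmk o i = some y}) ≤ κ := hcc i _ hVanti
  have hinj : #({o : (Order.succ κ).ord.ToType | w x (seqA κ A tmk o) = i}) ≤
      #({y : P i | ∃ o ∈ {o : (Order.succ κ).ord.ToType |
        w x (seqA κ A tmk o) = i}, seqA κ A tmk o i = some y}) := by
    refine mk_le_of_injective (f := fun o => ⟨(hval o.1 o.2).choose, o.1, o.2,
      (hval o.1 o.2).choose_spec⟩) ?_
    intro o o' h
    have hvals : (hval o.1 o.2).choose = (hval o'.1 o'.2).choose :=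
      congrArg Subtype.val h
    by_contra hne
    have hne' : o.1 ≠ o'.1 := fun hh => hne (Subtype.ext hh)
    rcases lt_or_gt_of_ne hne' with hlt | hlt
    · refine hpair o'.1 o'.2 o.1 o.2 hlt _ _ (hval o'.1 o'.2).choose_spec
        (hval o.1 o.2).choose_spec ⟨(hval o.1 o.2).choose, ?_, le_refl _⟩
      rw [hvals]
    · refine hpair o.1 o.2 o'.1 o'.2 hlt _ _ (hval o.1 o.2).choose_spec
        (hval o'.1 o'.2).choose_spec ⟨(hval o.1 o.2).choose, le_refl _, ?_⟩
      rw [hvals]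
  exact absurd (hOi.trans_le (hinj.trans hVκ)) (lt_irrefl κ)
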